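/- Let X be a nonempty finite type, let p^pre be a probability distribution on X with p^pre(x) > 0 for all x, let r : X → ℝ, and let β > 0. Define p_β(x) = exp(r(x)/β) · p^pre(x) / Z with Z = Σ_y exp(r(y)/β) · p^pre(y), and for a probability distribution p on X define the objective J(p) = Σ_x p(x) · r(x) − β · D_KL(p ‖ p^pre), where D_KL(p ‖ p^pre) = Σ_x p(x) · log(p(x) / p^pre(x)) (with the convention 0 · log 0 = 0). Then p_β is a probability distribution on X and for every probability distribution p on X, J(p) ≤ J(p_β); moreover J(p_β) = β · log Z. -/

import Mathlib

open Finset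

/-- The reward-weighted distribution `p_β(x) = exp(r(x)/β)·p^pre(x)/Z` is a probability
distribution, and it maximizes the KL-regularized reward objective
`J(p) = Σ_x p(x)·r(x) − β·D_KL(p ‖ p^pre)` over all probability distributions `p`;
moreover the optimal value is `J(p_β) = β·log Z`.
(Since `Real.log 0 = 0` in Mathlib, the summand `p x * Real.log (p x / ppre x)` obeys
the convention `0·log 0 = 0`.) -/
theorem reward_weighted_maximizes_objective {X : Type*} [Fintype X] [Nonempty X]
    (ppre : X → ℝ) (hpre_pos : ∀ x, 0 < ppre x) (hpre_sum : ∑ x, ppre x = 1)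
    (r : X → ℝ) (β : ℝ) (hβ : 0 < β)
    (Z : ℝ) (hZ : Z = ∑ y, Real.exp (r y / β) * ppre y)
    (pβ : X → ℝ) (hpβ : ∀ x, pβ x = Real.exp (r x / β) * ppre x / Z)
    (J : (X → ℝ) → ℝ)
    (hJ : ∀ p, J p = (∑ x, p x * r x) - β * ∑ x, p x * Real.log (p x / ppre x)) :
    ((∀ x, 0 ≤ pβ x) ∧ ∑ x, pβ x = 1) ∧
    (∀ p : X → ℝ, (∀ x, 0 ≤ p x) → (∑ x, p x = 1) → J p ≤ J pβ) ∧
    J pβ = β * Real.log Z := by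
  have hZpos : 0 < Z := by
    rw [hZ]
    exact Finset.sum_pos (fun y _ => mul_pos (Real.exp_pos _) (hpre_pos y))
      Finset.univ_nonempty
  have hpβpos : ∀ x, 0 < pβ x := fun x => by
    rw [hpβ]; exact div_pos (mul_pos (Real.exp_pos _) (hpre_pos x)) hZpos
  have hpβsum : ∑ x, pβ x = 1 := by
    rw [Finset.sum_congr rfl fun x _ => hpβ x, ← Finset.sum_div, ← hZ, div_self hZpos.ne']
  -- log of pβ ratio
  have hlogratio : ∀ x, Real.log (pβ x / ppre x) = r x / β - Real.log Z := by
    intro x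
    have h1 : pβ x / ppre x = Real.exp (r x / β) / Z := by
      rw [hpβ]; field_simp [hZpos.ne', (hpre_pos x).ne']
    rw [h1, Real.log_div (Real.exp_pos _).ne' hZpos.ne', Real.log_exp]
  -- value at pβ
  have hJpβ : J pβ = β * Real.log Z := by
    rw [hJ]
    have h1 : ∀ x, pβ x * Real.log (pβ x / ppre x) = pβ x * r x / β - pβ x * Real.log Z :=
      fun x => by rw [hlogratio x]; ring
    rw [Finset.sum_congr rfl fun x _ => h1 x, Finset.sum_sub_distrib,
      ← Finset.sum_mul, hpβsum, one_mul, ← Finset.sum_div]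
    field_simp
    ring
  refine ⟨⟨fun x => (hpβpos x).le, hpβsum⟩, ?_, hJpβ⟩
  intro p hp hpsum
  rw [hJpβ, hJ]
  -- key Gibbs inequality
  have key : ∀ x, p x * (r x / β - Real.log (p x / ppre x) - Real.log Z) ≤ pβ x - p x := by
    intro x
    rcases eq_or_lt_of_le (hp x) with h0 | h0
    · rw [← h0]; simp [(hpβpos x).le]
    · have hratio : r x / β - Real.log (p x / ppre x) - Real.log Z
          = Real.log (pβ x / p x) := by
        rw [Real.log_div (hpβpos x).ne' h0.ne',
          Real.log_div h0.ne' (hpre_pos x).ne']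
        have := hlogratio x
        rw [Real.log_div (hpβpos x).ne' (hpre_pos x).ne'] at this
        linarith
      rw [hratio]
      calc p x * Real.log (pβ x / p x) ≤ p x * (pβ x / p x - 1) :=
            mul_le_mul_of_nonneg_left
              (Real.log_le_sub_one_of_pos (div_pos (hpβpos x) h0)) (hp x)
        _ = pβ x - p x := by field_simp
  have hsum : ∑ x, p x * (r x / β - Real.log (p x / ppre x) - Real.log Z) ≤ 0 := by
    calc ∑ x, p x * (r x / β - Real.log (p x / ppre x) - Real.log Z)
        ≤ ∑ x, (pβ x - p x) := Finset.sum_le_sum fun x _ => key x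
      _ = 0 := by rw [Finset.sum_sub_distrib, hpβsum, hpsum]; ring
  have hexpand : ∑ x, p x * (r x / β - Real.log (p x / ppre x) - Real.log Z)
      = (∑ x, p x * r x) / β - (∑ x, p x * Real.log (p x / ppre x)) - Real.log Z := by
    have h1 : ∀ x, p x * (r x / β - Real.log (p x / ppre x) - Real.log Z)
        = p x * r x / β - p x * Real.log (p x / ppre x) - p x * Real.log Z := fun x => by ring
    rw [Finset.sum_congr rfl fun x _ => h1 x, Finset.sum_sub_distrib, Finset.sum_sub_distrib,
      ← Finset.sum_mul, hpsum, one_mul, ← Finset.sum_div]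
  rw [hexpand] at hsum
  have := mul_le_mul_of_nonneg_left hsum hβ.le
  rw [mul_zero] at this
  have h2 : β * ((∑ x, p x * r x) / β) = ∑ x, p x * r x := by field_simp
  nlinarith [this]
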